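/- Let V be a real vector space, x, x', y ∈ V, and w, w' ∈ GL(V) such that w(x) = x' + y, w'(x') = x + y, and w(y) = w'(y) = y. Then for all k ∈ ℤ: (w'w)ᵏ(x) = x + 2k·y, w(w'w)ᵏ(x) = x' + (2k+1)·y, (ww')ᵏ(x') = x' + 2k·y, and w'(ww')ᵏ(x') = x + (2k+1)·y. -/

import Mathlib

/-- If `w, w'` are invertible linear maps of a real vector space `V` with `w(x) = x' + y`,
`w'(x') = x + y` and `w(y) = w'(y) = y`, then for all integers `k`:
`(w'w)ᵏ(x) = x + 2k•y`, `w(w'w)ᵏ(x) = x' + (2k+1)•y`, `(ww')ᵏ(x') = x' + 2k•y` and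
`w'(ww')ᵏ(x') = x + (2k+1)•y`. -/
theorem stmt11 {V : Type*} [AddCommGroup V] [Module ℝ V] (w w' : V ≃ₗ[ℝ] V)
    (x x' y : V) (hx : w x = x' + y) (hx' : w' x' = x + y) (hy : w y = y)
    (hy' : w' y = y) (k : ℤ) :
    ((w' * w) ^ k) x = x + (2 * k) • y ∧
    (w * (w' * w) ^ k) x = x' + (2 * k + 1) • y ∧
    ((w * w') ^ k) x' = x' + (2 * k) • y ∧
    (w' * (w * w') ^ k) x' = x + (2 * k + 1) • y := by
  have hwy : w.symm y = y := by rw [LinearEquiv.symm_apply_eq]; exact hy.symm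
  have hwy' : w'.symm y = y := by rw [LinearEquiv.symm_apply_eq]; exact hy'.symm
  have hwx' : w.symm x' = x - y := by
    rw [LinearEquiv.symm_apply_eq, map_sub, hx, hy]; abel
  have hwx : w'.symm x = x' - y := by
    rw [LinearEquiv.symm_apply_eq, map_sub, hx', hy']; abel
  have key : ∀ k : ℤ, ((w' * w) ^ k) x = x + (2 * k) • y ∧
      ((w * w') ^ k) x' = x' + (2 * k) • y := by
    intro k
    induction k using Int.induction_on with
    | zero => simp
    | succ n ih =>
      obtain ⟨h1, h2⟩ := ih
      have e1 : ((w' * w) ^ ((n : ℤ) + 1)) x = w' (w (((w' * w) ^ (n : ℤ)) x)) := by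
        rw [add_comm, zpow_one_add]; rfl
      have e2 : ((w * w') ^ ((n : ℤ) + 1)) x' = w (w' (((w * w') ^ (n : ℤ)) x')) := by
        rw [add_comm, zpow_one_add]; rfl
      constructor
      · rw [e1, h1]
        simp only [map_add, map_zsmul, hx, hx', hy, hy']
        module
      · rw [e2, h2]
        simp only [map_add, map_zsmul, hx, hx', hy, hy']
        module
    | pred n ih =>
      obtain ⟨h1, h2⟩ := ih
      have he : (-(n:ℤ) - 1) = -1 + -n := by ring
      have e1 : ((w' * w) ^ (-(n:ℤ) - 1)) x = w.symm (w'.symm (((w' * w) ^ (-n : ℤ)) x)) := by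
        rw [he, zpow_add, zpow_neg_one, mul_inv_rev]; rfl
      have e2 : ((w * w') ^ (-(n:ℤ) - 1)) x' = w'.symm (w.symm (((w * w') ^ (-n : ℤ)) x')) := by
        rw [he, zpow_add, zpow_neg_one, mul_inv_rev]; rfl
      constructor
      · rw [e1, h1]
        simp only [map_add, map_sub, map_zsmul, hwx, hwx', hwy, hwy']
        module
      · rw [e2, h2]
        simp only [map_add, map_sub, map_zsmul, hwx, hwx', hwy, hwy']
        module
  obtain ⟨h1, h2⟩ := key k
  refine ⟨h1, ?_, h2, ?_⟩
  · show w (((w' * w) ^ k) x) = _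
    rw [h1, map_add, map_zsmul, hx, hy]
    module
  · show w' (((w * w') ^ k) x') = _
    rw [h2, map_add, map_zsmul, hx', hy']
    module
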